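/- arXiv:1302.3897 — 4 statements merged into one kernel-verified Lean document; each statement's English description precedes it below -/
import Mathlib

section
/- Let k be a field of characteristic zero, (R, δ) a k-differential ring, and let A, B be 2×2 matrices over R with det A = 1 and det B = 1. Suppose that every entry of B lies in R₀ = ker δ, that A·X = X·A for every 2×2 trace-zero matrix X over R, and that A·M = M·B for every 2×2 matrix M over R. Then there exists a ∈ R with a² = 1, δ(a) = 0, A = a·1 and B = a·1. Conversely, for any a ∈ R with a² = 1 and δ(a) = 0, the pair A = a·1, B = a·1 satisfies all of these conditions. (This computes the kernel of the homomorphism ι_R : SL₂(R) × SL₂(R₀) → GrAut(F)(R) as μ₂(R₀).) -/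
/-- The kernel of `ι_R : SL₂(R) × SL₂(R₀) → GrAut(F)(R)` is `μ₂(R₀)`:
a pair `(A, B)` with `det A = det B = 1`, `B` with entries in `R₀ = ker δ`,
`A` centralizing the trace-zero matrices and `A·M = M·B` for all `M`,
is exactly a pair `(a·1, a·1)` with `a² = 1` and `δ a = 0`. -/
theorem kernel_iota_eq_mu2
    (k : Type*) [Field k] [CharZero k]
    (R : Type*) [CommRing R] [Algebra k R]
    (δ : Derivation k R R)
    (A B : Matrix (Fin 2) (Fin 2) R) :
    (A.det = 1 ∧ B.det = 1 ∧ (∀ i j, δ (B i j) = 0) ∧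
      (∀ X : Matrix (Fin 2) (Fin 2) R, X.trace = 0 → A * X = X * A) ∧
      (∀ M : Matrix (Fin 2) (Fin 2) R, A * M = M * B)) ↔
    (∃ a : R, a ^ 2 = 1 ∧ δ a = 0 ∧
      A = a • (1 : Matrix (Fin 2) (Fin 2) R) ∧
      B = a • (1 : Matrix (Fin 2) (Fin 2) R)) := by
  constructor
  · rintro ⟨hdet, -, hδ, -, hAll⟩
    have hBA : B = A := by simpa using (hAll 1).symm
    subst hBA
    have h01 := hAll (Matrix.single 0 1 1)
    have h10 := hAll (Matrix.single 1 0 1)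
    have e1 : B 0 0 = B 1 1 := by
      have := congrFun (congrFun h01 0) 1
      simpa [Matrix.mul_apply, Matrix.single, Fin.sum_univ_two] using this
    have e2 : B 1 0 = 0 := by
      have := congrFun (congrFun h01 1) 1
      simpa [Matrix.mul_apply, Matrix.single, Fin.sum_univ_two] using this
    have e3 : B 0 1 = 0 := by
      have := congrFun (congrFun h10 0) 0
      simpa [Matrix.mul_apply, Matrix.single, Fin.sum_univ_two] using this
    refine ⟨B 0 0, ?_, hδ 0 0, ?_, ?_⟩
    · have := hdet
      rw [Matrix.det_fin_two] at this
      rw [e2, e3] at this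
      rw [sq]
      nth_rewrite 2 [e1]
      simpa using this
    · ext i j
      fin_cases i <;> fin_cases j <;>
        simp [Matrix.one_apply, e1, e2, e3]
    · ext i j
      fin_cases i <;> fin_cases j <;>
        simp [Matrix.one_apply, e1, e2, e3]
  · rintro ⟨a, ha2, hδa, rfl, rfl⟩
    refine ⟨?_, ?_, ?_, ?_, ?_⟩
    · simp [Matrix.det_smul, ha2]
    · simp [Matrix.det_smul, ha2]
    · intro i j
      fin_cases i <;> fin_cases j <;> simp [Matrix.one_apply, hδa]
    · intro X _
      simp [Matrix.smul_mul, Matrix.mul_smul]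
    · intro M
      simp [Matrix.smul_mul, Matrix.mul_smul]
end

section
/- Let R be a commutative ring, δ : R → R a derivation, and let A, B, M, N be 2×2 matrices over R with det A = 1 and det B = 1 (so A⁻¹ = adjugate(A), B⁻¹ = adjugate(B)). Assume δ annihilates every entry of B, M, and N. Then 2·( δ(A·M·B⁻¹)·(A·N·B⁻¹)† − (A·N·B⁻¹)·δ((A·M·B⁻¹)†) ) = δ( A·(M·N† − N·M†)·A⁻¹ ) + 2·tr(M·N†)·( δ(A)·A⁻¹ ), where δ is applied to matrices entrywise. (This is the key computation showing that θ_{A,B} preserves the λ-bracket [G(M)_λ G(N)] in the N=4 Lie conformal superalgebra.) -/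
/-- The dagger of a `2×2` matrix `!![a, b; c, d]` is `!![-d, b; c, -a]`,
i.e. the negative of the adjugate. -/
def dagger {R : Type*} [CommRing R] (M : Matrix (Fin 2) (Fin 2) R) :
    Matrix (Fin 2) (Fin 2) R :=
  -M.adjugate

section Helpers

variable {R : Type*} [CommRing R]

lemma mapδ_mul (δ : Derivation ℤ R R) (A B : Matrix (Fin 2) (Fin 2) R) :
    (A * B).map (δ : R → R) = A.map δ * B + A * B.map δ := by
  ext i j
  simp [Matrix.mul_apply, Matrix.map_apply, map_sum, Derivation.leibniz, smul_eq_mul,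
    Finset.sum_add_distrib, mul_comm]
  ring

lemma adj_map (δ : Derivation ℤ R R) (A : Matrix (Fin 2) (Fin 2) R) :
    (A.adjugate).map (δ : R → R) = (A.map δ).adjugate := by
  ext i j
  fin_cases i <;> fin_cases j <;> simp [Matrix.adjugate_fin_two, Matrix.map_apply]

lemma adj_adj (B : Matrix (Fin 2) (Fin 2) R) : B.adjugate.adjugate = B := by
  ext i j
  fin_cases i <;> fin_cases j <;> simp [Matrix.adjugate_fin_two]

lemma mul_adj_add (M N : Matrix (Fin 2) (Fin 2) R) :
    M * N.adjugate + N * M.adjugate = (M * N.adjugate).trace • (1 : Matrix (Fin 2) (Fin 2) R) := by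
  ext i j
  fin_cases i <;> fin_cases j <;>
    simp [Matrix.adjugate_fin_two, Matrix.mul_apply, Matrix.trace_fin_two,
      Fin.sum_univ_succ, Matrix.one_apply] <;> ring

lemma trace_mapδ_adj (δ : Derivation ℤ R R) (A : Matrix (Fin 2) (Fin 2) R) :
    (A.map (δ : R → R) * A.adjugate).trace = δ A.det := by
  simp [Matrix.adjugate_fin_two, Matrix.mul_apply, Matrix.trace_fin_two,
    Fin.sum_univ_succ, Matrix.det_fin_two, Matrix.map_apply, Derivation.leibniz, smul_eq_mul]
  ring

lemma final_alg (X A C Y Z : Matrix (Fin 2) (Fin 2) R) (t : R)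
    (hE : A * Z = -(X * Y)) :
    (2 : R) • (X * C * Y - A * ((t • 1 - C) * Z))
      = X * (C - (t • 1 - C)) * Y + A * ((C - (t • 1 - C)) * Z) + (2 * t) • (X * Y) := by
  simp only [smul_sub, sub_mul, mul_sub, Matrix.smul_mul, Matrix.mul_smul, smul_smul,
    one_mul, mul_one, mul_assoc, hE]
  module

end Helpers

/-- The key computation showing `θ_{A,B}` preserves the bracket `[G(M)_λ G(N)]`:
for `A, B ∈ SL₂(R)` (inverses given by adjugates) with `δ` vanishing on the
entries of `B`, `M`, `N`,
`2·(δ(A·M·B⁻¹)·(A·N·B⁻¹)† − (A·N·B⁻¹)·δ((A·M·B⁻¹)†))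
  = δ(A·(M·N† − N·M†)·A⁻¹) + 2·tr(M·N†)·(δ(A)·A⁻¹)`. -/
theorem theta_preserves_GG_bracket
    {R : Type*} [CommRing R] (δ : Derivation ℤ R R)
    (A B M N : Matrix (Fin 2) (Fin 2) R)
    (hA : A.det = 1) (hB : B.det = 1)
    (hB0 : ∀ i j, δ (B i j) = 0)
    (hM0 : ∀ i j, δ (M i j) = 0)
    (hN0 : ∀ i j, δ (N i j) = 0) :
    (2 : R) • ( ((A * M * B.adjugate).map (δ : R → R)) * dagger (A * N * B.adjugate)
        - (A * N * B.adjugate) * ((dagger (A * M * B.adjugate)).map (δ : R → R)) )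
      = ((A * (M * dagger N - N * dagger M) * A.adjugate).map (δ : R → R))
        + (2 * (M * dagger N).trace) • (A.map (δ : R → R) * A.adjugate) := by
  set X := A.map (δ : R → R) with hX
  have hMmap : M.map (δ : R → R) = 0 := by ext i j; simp [Matrix.map_apply, hM0 i j]
  have hNmap : N.map (δ : R → R) = 0 := by ext i j; simp [Matrix.map_apply, hN0 i j]
  have hBmap : B.map (δ : R → R) = 0 := by ext i j; simp [Matrix.map_apply, hB0 i j]
  have hadj0 : ∀ P : Matrix (Fin 2) (Fin 2) R, P.map (δ : R → R) = 0 →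
      (P.adjugate).map (δ : R → R) = 0 := by
    intro P hP
    rw [adj_map, hP]
    ext i j; fin_cases i <;> fin_cases j <;> simp [Matrix.adjugate_fin_two]
  have hBadjmap := hadj0 B hBmap
  have hdagMmap : (dagger M).map (δ : R → R) = 0 := by
    have := hadj0 M hMmap
    ext i j; simpa [dagger, Matrix.map_apply, ← Matrix.ext_iff] using congrFun (congrFun this i) j
  -- dagger of triple products
  have hdagM : dagger (A * M * B.adjugate) = B * dagger M * A.adjugate := by
    simp only [dagger, Matrix.adjugate_mul_distrib, adj_adj]
    noncomm_ring
  have hdagN : dagger (A * N * B.adjugate) = B * dagger N * A.adjugate := by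
    simp only [dagger, Matrix.adjugate_mul_distrib, adj_adj]
    noncomm_ring
  -- derivatives
  have h1 : (A * M * B.adjugate).map (δ : R → R) = X * M * B.adjugate := by
    rw [mapδ_mul, mapδ_mul, hMmap, hBadjmap]
    simp
    rfl
  have h2 : (B * dagger M * A.adjugate).map (δ : R → R) = B * dagger M * X.adjugate := by
    rw [mapδ_mul, mapδ_mul, hBmap, hdagMmap, adj_map]
    simp
    rfl
  have h3 : (A * (M * dagger N - N * dagger M) * A.adjugate).map (δ : R → R)
      = X * (M * dagger N - N * dagger M) * A.adjugate
        + A * ((M * dagger N - N * dagger M) * X.adjugate) := by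
    have hC : (M * dagger N - N * dagger M).map (δ : R → R) = 0 := by
      ext i j
      have h4 := hadj0 N hNmap
      have h5 := hadj0 M hMmap
      simp [dagger, Matrix.map_apply, Matrix.mul_apply, Fin.sum_univ_succ,
        Derivation.leibniz, smul_eq_mul, ← Matrix.ext_iff] at *
      fin_cases i <;> fin_cases j <;> simp [h4, h5, hM0, hN0]
    rw [mapδ_mul, mapδ_mul, hC, adj_map]
    simp [Matrix.mul_assoc]
    rfl
  -- key relations
  have hBB : B.adjugate * B = 1 := by rw [Matrix.adjugate_mul, hB, one_smul]
  have hE2 : A * X.adjugate = -(X * A.adjugate) := by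
    have h := mul_adj_add X A
    rw [trace_mapδ_adj, hA, Derivation.map_one_eq_zero, zero_smul] at h
    exact eq_neg_of_add_eq_zero_right h
  have E0 : M * dagger N + N * dagger M
      = (M * dagger N).trace • (1 : Matrix (Fin 2) (Fin 2) R) := by
    have h := mul_adj_add M N
    simp only [dagger, Matrix.mul_neg, ← neg_add, h, Matrix.trace_neg, neg_smul, neg_neg]
  have E1 : N * dagger M
      = (M * dagger N).trace • (1 : Matrix (Fin 2) (Fin 2) R) - M * dagger N :=
    eq_sub_of_add_eq' E0
  -- collapsing B.adjugate * B
  have k1 : X * M * B.adjugate * (B * dagger N * A.adjugate)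
      = X * (M * dagger N) * A.adjugate := by
    rw [show X * M * B.adjugate * (B * dagger N * A.adjugate)
        = X * M * (B.adjugate * B) * (dagger N * A.adjugate) from by noncomm_ring, hBB]
    noncomm_ring
  have k2 : A * N * B.adjugate * (B * dagger M * X.adjugate)
      = A * ((N * dagger M) * X.adjugate) := by
    rw [show A * N * B.adjugate * (B * dagger M * X.adjugate)
        = A * N * (B.adjugate * B) * (dagger M * X.adjugate) from by noncomm_ring, hBB]
    noncomm_ring
  rw [h1, hdagN, hdagM, h2, h3, k1, k2, E1]
  exact final_alg X A (M * dagger N) A.adjugate X.adjugate _ hE2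
end

section
/- Let R be a commutative ℚ-algebra, δ : R → R a derivation, and A a 2×2 matrix over R with det A = 1 (so A⁻¹ = adjugate(A)). Let X₀ be a 2×2 trace-zero matrix over R such that δ(A·Z·A⁻¹) = [X₀, A·Z·A⁻¹] for each Z ∈ {!![0,1;0,0], !![0,0;1,0], !![1,0;0,-1]} (a basis of the trace-zero 2×2 matrices), where δ is applied entrywise and [X, Y] = X·Y − Y·X. Then X₀ = δ(A)·A⁻¹. -/
section aux
variable {R : Type*} [CommRing R] [Algebra ℚ R] (δ : Derivation ℚ R R)

lemma dmul_aux (M N : Matrix (Fin 2) (Fin 2) R) :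
    (M * N).map (δ : R → R) = M.map (δ : R → R) * N + M * N.map (δ : R → R) := by
  ext i j
  simp [Matrix.mul_apply, Matrix.map_apply, Fin.sum_univ_two, Derivation.leibniz,
    smul_eq_mul]
  ring

lemma done_aux : (1 : Matrix (Fin 2) (Fin 2) R).map (δ : R → R) = 0 := by
  ext i j
  simp [Matrix.map_apply, Matrix.one_apply]
  split <;> simp

end aux

/-- If a trace-zero matrix `X₀` satisfies `δ(A·Z·A⁻¹) = [X₀, A·Z·A⁻¹]` for `Z`
running through the standard basis `!![0,1;0,0], !![0,0;1,0], !![1,0;0,-1]` of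
the trace-zero `2×2` matrices, and `det A = 1` (so `A⁻¹ = adjugate A`),
then `X₀ = δ(A)·A⁻¹`. -/
theorem X0_eq_logDeriv
    {R : Type*} [CommRing R] [Algebra ℚ R] (δ : Derivation ℚ R R)
    (A X₀ : Matrix (Fin 2) (Fin 2) R) (hA : A.det = 1)
    (hX₀ : X₀.trace = 0)
    (h1 : (A * !![(0 : R), 1; 0, 0] * A.adjugate).map (δ : R → R)
      = X₀ * (A * !![(0 : R), 1; 0, 0] * A.adjugate)
        - (A * !![(0 : R), 1; 0, 0] * A.adjugate) * X₀)
    (h2 : (A * !![(0 : R), 0; 1, 0] * A.adjugate).map (δ : R → R)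
      = X₀ * (A * !![(0 : R), 0; 1, 0] * A.adjugate)
        - (A * !![(0 : R), 0; 1, 0] * A.adjugate) * X₀)
    (h3 : (A * !![(1 : R), 0; 0, -1] * A.adjugate).map (δ : R → R)
      = X₀ * (A * !![(1 : R), 0; 0, -1] * A.adjugate)
        - (A * !![(1 : R), 0; 0, -1] * A.adjugate) * X₀) :
    X₀ = A.map (δ : R → R) * A.adjugate := by
  set B := A.map (δ : R → R) * A.adjugate with hB
  have hAadj : A * A.adjugate = 1 := by rw [Matrix.mul_adjugate, hA, one_smul]
  have hadjA : A.adjugate * A = 1 := by rw [Matrix.adjugate_mul, hA, one_smul]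
  -- derivative of adjugate
  have hd1 : A.adjugate.map (δ : R → R) * A + A.adjugate * A.map (δ : R → R) = 0 := by
    rw [← dmul_aux, hadjA, done_aux]
  have hadjδ : A.adjugate.map (δ : R → R) = -(A.adjugate * B) := by
    have := congrArg (fun M => M * A.adjugate) hd1
    simp only [add_mul, zero_mul] at this
    rw [mul_assoc, hAadj, mul_one] at this
    rw [hB, ← mul_assoc]
    linear_combination (norm := noncomm_ring) this
  -- key commutator computation
  have key : ∀ Z : Matrix (Fin 2) (Fin 2) R, Z.map (δ : R → R) = 0 →
      (A * Z * A.adjugate).map (δ : R → R)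
        = B * (A * Z * A.adjugate) - (A * Z * A.adjugate) * B := by
    intro Z hZ
    have e1 : (A * Z * A.adjugate).map (δ : R → R)
        = A.map (δ : R → R) * Z * A.adjugate - (A * Z * A.adjugate) * B := by
      rw [dmul_aux, dmul_aux, hZ, hadjδ]
      noncomm_ring
    have e2 : B * (A * Z * A.adjugate) = A.map (δ : R → R) * Z * A.adjugate := by
      rw [hB]
      calc A.map (δ : R → R) * A.adjugate * (A * Z * A.adjugate)
          = A.map (δ : R → R) * (A.adjugate * A) * (Z * A.adjugate) := by noncomm_ring
        _ = A.map (δ : R → R) * Z * A.adjugate := by rw [hadjA, mul_one, mul_assoc]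
    rw [e1, e2]
  -- Y commutes with conjugated basis elements
  set Y := X₀ - B with hY
  have comm : ∀ Z : Matrix (Fin 2) (Fin 2) R, Z.map (δ : R → R) = 0 →
      (A * Z * A.adjugate).map (δ : R → R)
        = X₀ * (A * Z * A.adjugate) - (A * Z * A.adjugate) * X₀ →
      (A.adjugate * Y * A) * Z = Z * (A.adjugate * Y * A) := by
    intro Z hZ hXZ
    have hcomm : Y * (A * Z * A.adjugate) = (A * Z * A.adjugate) * Y := by
      have h' : X₀ * (A * Z * A.adjugate) - (A * Z * A.adjugate) * X₀
          = B * (A * Z * A.adjugate) - (A * Z * A.adjugate) * B :=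
        hXZ.symm.trans (key Z hZ)
      rw [hY]
      linear_combination (norm := noncomm_ring) h'
    have := congrArg (fun M => A.adjugate * M * A) hcomm
    calc (A.adjugate * Y * A) * Z
        = (A.adjugate * Y * A) * Z * (A.adjugate * A) := by rw [hadjA, mul_one]
      _ = A.adjugate * (Y * (A * Z * A.adjugate)) * A := by noncomm_ring
      _ = A.adjugate * ((A * Z * A.adjugate) * Y) * A := by rw [this]
      _ = (A.adjugate * A) * Z * (A.adjugate * Y * A) := by noncomm_ring
      _ = Z * (A.adjugate * Y * A) := by rw [hadjA, one_mul]
  have hZ1 : (!![(0 : R), 1; 0, 0]).map (δ : R → R) = 0 := by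
    ext i j; fin_cases i <;> fin_cases j <;> simp [Matrix.map_apply]
  have hZ2 : (!![(0 : R), 0; 1, 0]).map (δ : R → R) = 0 := by
    ext i j; fin_cases i <;> fin_cases j <;> simp [Matrix.map_apply]
  set W := A.adjugate * Y * A with hW
  have c1 := comm _ hZ1 h1
  have c2 := comm _ hZ2 h2
  -- entrywise consequences
  have w10 : W 1 0 = 0 := by
    have := congrFun (congrFun c1 1) 1
    simpa [Matrix.mul_apply, Fin.sum_univ_two] using this
  have w01 : W 0 1 = 0 := by
    have := congrFun (congrFun c2 0) 0
    simpa [Matrix.mul_apply, Fin.sum_univ_two] using this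
  have weq : W 0 0 = W 1 1 := by
    have := congrFun (congrFun c1 0) 1
    simpa [Matrix.mul_apply, Fin.sum_univ_two] using this
  -- trace of W is zero
  have hdet : A 0 0 * A 1 1 - A 0 1 * A 1 0 = 1 := by
    rw [← Matrix.det_fin_two, hA]
  have htrB : B.trace = 0 := by
    have hδ : δ (A 0 0 * A 1 1 - A 0 1 * A 1 0) = 0 := by rw [hdet]; exact δ.map_one_eq_zero
    simp only [map_sub, Derivation.leibniz, smul_eq_mul] at hδ
    simp [hB, Matrix.trace_fin_two, Matrix.mul_apply, Fin.sum_univ_two,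
      Matrix.adjugate_fin_two_of, Matrix.adjugate_fin_two, Matrix.map_apply]
    linear_combination hδ
  have htrW : W.trace = 0 := by
    rw [hW, Matrix.trace_mul_cycle, hAadj, one_mul, hY,
      Matrix.trace_sub, hX₀, htrB, sub_zero]
  have w00 : W 0 0 = 0 := by
    have h2w : W 0 0 + W 0 0 = 0 := by
      rw [Matrix.trace_fin_two] at htrW
      rw [weq] at htrW ⊢; exact htrW
    have : (2 : ℚ) • W 0 0 = 0 := by
      rw [two_smul]; exact h2w
    have := congrArg (fun x => (2 : ℚ)⁻¹ • x) this
    simpa [smul_smul] using this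
  have hW0 : W = 0 := by
    ext i j; fin_cases i <;> fin_cases j <;>
      simp [w00, w01, w10, weq ▸ w00, Matrix.zero_apply]
  have hY0 : Y = 0 := by
    have := congrArg (fun M => A * M * A.adjugate) hW0
    simp only [mul_zero, zero_mul] at this
    calc Y = (A * A.adjugate) * Y * (A * A.adjugate) := by rw [hAadj, one_mul, mul_one]
      _ = A * W * A.adjugate := by rw [hW]; noncomm_ring
      _ = 0 := this
  have := sub_eq_zero.mp hY0
  rw [hY] at hY0
  exact sub_eq_zero.mp hY0
end

section
/- Let S be a commutative ℚ-algebra and let ν be an S-linear endomorphism of the S-module of 2×2 matrices over S such that ν(X·M) = X·ν(M) for every trace-zero 2×2 matrix X over S and every 2×2 matrix M over S. Then ν(M) = M·ν(1) for every 2×2 matrix M over S, where 1 is the identity matrix; that is, ν is right multiplication by the matrix B⁻¹ := ν(1). In particular, if ν is bijective then ν(1) is invertible. -/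
/-- An `S`-linear endomorphism `ν` of `S^{2×2}` commuting with left multiplication
by all trace-zero matrices is right multiplication by `ν(1)`; in particular,
if `ν` is bijective then `ν(1)` is invertible. -/
theorem sl2_equivariant_is_right_mul
    {S : Type*} [CommRing S] [Algebra ℚ S]
    (ν : Matrix (Fin 2) (Fin 2) S →ₗ[S] Matrix (Fin 2) (Fin 2) S)
    (h : ∀ X M : Matrix (Fin 2) (Fin 2) S, X.trace = 0 → ν (X * M) = X * ν M) :
    (∀ M : Matrix (Fin 2) (Fin 2) S, ν M = M * ν 1) ∧
    (Function.Bijective ν → IsUnit (ν 1)) := by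
  have key : ∀ M : Matrix (Fin 2) (Fin 2) S, ν M = M * ν 1 := by
    intro M
    set c : S := algebraMap ℚ S (2⁻¹) * M.trace with hc
    have h2 : c * 2 = M.trace := by
      have : (algebraMap ℚ S (2⁻¹)) * 2 = 1 := by
        rw [show (2 : S) = algebraMap ℚ S 2 from (map_ofNat _ 2).symm, ← map_mul]
        norm_num
      rw [hc, mul_comm (algebraMap ℚ S (2⁻¹)) M.trace, mul_assoc, this, mul_one]
    have hX : (M - c • 1).trace = 0 := by
      rw [Matrix.trace_sub, Matrix.trace_smul, Matrix.trace_one]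
      simp only [Fintype.card_fin, smul_eq_mul]
      rw [Nat.cast_ofNat, h2, sub_self]
    have hmul := h (M - c • 1) 1 hX
    rw [mul_one] at hmul
    have hdecomp : M = c • (1 : Matrix (Fin 2) (Fin 2) S) + (M - c • 1) := by abel
    calc ν M = ν (c • 1 + (M - c • 1)) := by rw [← hdecomp]
      _ = c • ν 1 + ν (M - c • 1) := by rw [map_add, map_smul]
      _ = c • ν 1 + (M - c • 1) * ν 1 := by rw [hmul]
      _ = (c • 1 + (M - c • 1)) * ν 1 := by rw [add_mul, Matrix.smul_mul, one_mul]
      _ = M * ν 1 := by rw [← hdecomp]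
  refine ⟨key, fun hb => ?_⟩
  obtain ⟨M, hM⟩ := hb.surjective 1
  rw [key M] at hM
  exact ⟨⟨ν 1, M, mul_eq_one_comm.mp hM, hM⟩, rfl⟩
end
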